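/- There exist constants C > 1 and n₀ ≥ 1 such that for every integer n ≥ n₀ and every ψ ∈ (arccos(1/a), π/2) with 1 − 1/n² < a·cos ψ < 1 − 1/(n+1)², the function ζ is differentiable at ψ and C^{-1}·n³ ≤ −ζ'(ψ) ≤ C·n³. -/

import Mathlib

open MeasureTheory Set Real

noncomputable section

/-- The profile of the surface of revolution: `ξ(s) = 1` for `s ≤ L` and
`ξ(s) = 1 + (s-L)^r` for `s ≥ L`. -/
def profileXi (r L : ℝ) (s : ℝ) : ℝ := if s ≤ L then 1 else 1 + (s - L) ^ r

/-- The derivative of the profile. -/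
def profileXi' (r L : ℝ) (s : ℝ) : ℝ := if s ≤ L then 0 else r * (s - L) ^ (r - 1)

/-- `A(s) = √(1 + ξ'(s)²)/ξ(s)`. -/
def profileA (r L : ℝ) (s : ℝ) : ℝ :=
  Real.sqrt (1 + profileXi' r L s ^ 2) / profileXi r L s

/-- The angular displacement function of crossing geodesics:
`ζ(ψ) = 2 a cos ψ ∫₀^{ε₁} A(s) (ξ(s)² - a² cos² ψ)^{-1/2} ds`, where `a = ξ(ε₁)`. -/
def zetaFun (r L ε₁ a : ℝ) (ψ : ℝ) : ℝ :=
  2 * a * Real.cos ψ *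
    ∫ s in (0:ℝ)..ε₁,
      profileA r L s * (profileXi r L s ^ 2 - a ^ 2 * Real.cos ψ ^ 2) ^ (-(1/2) : ℝ)

namespace ZetaAux
variable {r L ε₁ : ℝ}

lemma xi_ge_one (hr : 0 < r) (s : ℝ) : 1 ≤ profileXi r L s := by
  unfold profileXi
  split_ifs with h
  · exact le_refl _
  · push_neg at h
    have := Real.rpow_nonneg (by linarith : (0:ℝ) ≤ s - L) r
    linarith

lemma xi_pos (hr : 0 < r) (s : ℝ) : 0 < profileXi r L s :=
  lt_of_lt_of_le one_pos (xi_ge_one hr s)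

lemma xi'_nonneg (hr : 0 < r) (s : ℝ) : 0 ≤ profileXi' r L s := by
  unfold profileXi'
  split_ifs with h
  · exact le_refl _
  · push_neg at h
    exact mul_nonneg hr.le (Real.rpow_nonneg (by linarith) _)

lemma xi'_le (hr : 1 ≤ r) (hLε : L ≤ ε₁) {s : ℝ} (hs : s ≤ ε₁) :
    profileXi' r L s ≤ r * (ε₁ - L) ^ (r - 1) := by
  unfold profileXi'
  split_ifs with h
  · exact mul_nonneg (by linarith) (Real.rpow_nonneg (by linarith) _)
  · push_neg at h
    exact mul_le_mul_of_nonneg_left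
      (Real.rpow_le_rpow (by linarith) (by linarith) (by linarith)) (by linarith)

lemma A_eq_one {s : ℝ} (h : s ≤ L) : profileA r L s = 1 := by
  unfold profileA profileXi profileXi'
  simp [h]

lemma A_nonneg (hr : 0 < r) (s : ℝ) : 0 ≤ profileA r L s :=
  div_nonneg (Real.sqrt_nonneg _) (xi_pos hr s).le

lemma A_le (hr : 1 ≤ r) (hLε : L ≤ ε₁) {s : ℝ} (hs : s ≤ ε₁) :
    profileA r L s ≤ Real.sqrt (1 + (r * (ε₁ - L) ^ (r - 1)) ^ 2) := by
  have h1 : profileA r L s ≤ Real.sqrt (1 + profileXi' r L s ^ 2) :=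
    div_le_self (Real.sqrt_nonneg _) (xi_ge_one (by linarith) s)
  refine h1.trans (Real.sqrt_le_sqrt ?_)
  have h2 := xi'_nonneg (L := L) (show (0:ℝ) < r by linarith) s
  have h3 := xi'_le hr hLε hs
  nlinarith

lemma cont_xi (hr : 0 < r) : Continuous (profileXi r L) := by
  unfold profileXi
  apply Continuous.if_le
  · exact continuous_const
  · exact continuous_const.add (continuous_iff_continuousAt.2 fun s =>
      (continuous_id.sub continuous_const).continuousAt.rpow_const (Or.inr hr.le))
  · exact continuous_id
  · exact continuous_const
  · intro s hs
    simp [hs, Real.zero_rpow hr.ne']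

lemma cont_xi' (hr : 1 < r) : Continuous (profileXi' r L) := by
  unfold profileXi'
  apply Continuous.if_le
  · exact continuous_const
  · exact continuous_const.mul (continuous_iff_continuousAt.2 fun s =>
      (continuous_id.sub continuous_const).continuousAt.rpow_const (Or.inr (by linarith)))
  · exact continuous_id
  · exact continuous_const
  · intro s hs
    simp [hs, Real.zero_rpow (by linarith : r - 1 ≠ 0)]

lemma cont_A (hr : 1 < r) : Continuous (profileA r L) :=
  ((continuous_const.add ((cont_xi' hr).pow 2)).sqrt).div
    (cont_xi (by linarith)) fun s => (xi_pos (by linarith) s).ne'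

lemma cos_lip (x y : ℝ) : |Real.cos x - Real.cos y| ≤ |x - y| := by
  rw [Real.cos_sub_cos]
  have h1 : |Real.sin ((x + y) / 2)| ≤ 1 := abs_le.2 ⟨Real.neg_one_le_sin _, Real.sin_le_one _⟩
  have h2 : |Real.sin ((x - y) / 2)| ≤ |(x - y) / 2| := Real.abs_sin_le_abs
  calc |(-2) * Real.sin ((x + y) / 2) * Real.sin ((x - y) / 2)|
      = 2 * (|Real.sin ((x + y) / 2)| * |Real.sin ((x - y) / 2)|) := by
        rw [abs_mul, abs_mul]; norm_num; ring
    _ ≤ 2 * (1 * |(x - y) / 2|) :=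
        mul_le_mul_of_nonneg_left (mul_le_mul h1 h2 (abs_nonneg _) zero_le_one) (by norm_num)
    _ = |x - y| := by rw [abs_div, abs_two]; ring

lemma rpow_half_inv {t : ℝ} (ht : 0 < t) : t ^ (-(1/2) : ℝ) = (Real.sqrt t)⁻¹ := by
  rw [Real.rpow_neg ht.le, Real.sqrt_eq_rpow]

lemma rpow_threehalf_inv {t : ℝ} (ht : 0 < t) :
    t ^ ((-(1/2) : ℝ) - 1) = (Real.sqrt t * t)⁻¹ := by
  rw [show ((-(1/2) : ℝ) - 1) = -(1/2 + 1) by ring, Real.rpow_neg ht.le,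
    Real.rpow_add ht, Real.rpow_one, Real.sqrt_eq_rpow]

end ZetaAux

set_option maxHeartbeats 1600000 in
/-- Lemma 3.2(3a), first derivative: on the `n`-th crossing homogeneity band
`1 - 1/n² < a cos ψ < 1 - 1/(n+1)²`, the function `ζ` is differentiable and
`ζ'(ψ) ≈ -n³`. -/
theorem zeta_deriv_crossing_band
    (r L ε₁ : ℝ) (hr : 4 < r) (hL : 0 < L) (hLε : L < ε₁)
    (a : ℝ) (ha : a = 1 + (ε₁ - L) ^ r) :
    ∃ C : ℝ, 1 < C ∧ ∃ n₀ : ℕ, 1 ≤ n₀ ∧ ∀ n : ℕ, n₀ ≤ n →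
      ∀ ψ ∈ Set.Ioo (Real.arccos (1 / a)) (π / 2),
        1 - 1 / (n : ℝ) ^ 2 < a * Real.cos ψ →
        a * Real.cos ψ < 1 - 1 / ((n : ℝ) + 1) ^ 2 →
        DifferentiableAt ℝ (zetaFun r L ε₁ a) ψ ∧
        (n : ℝ) ^ 3 / C ≤ -deriv (zetaFun r L ε₁ a) ψ ∧
        -deriv (zetaFun r L ε₁ a) ψ ≤ C * (n : ℝ) ^ 3 := by
  have hr0 : (0:ℝ) < r := by linarith
  have hr1 : (1:ℝ) < r := by linarith
  have hε₁ : (0:ℝ) < ε₁ := lt_trans hL hLε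
  have ha1 : 1 < a := by
    have := Real.rpow_pos_of_pos (show (0:ℝ) < ε₁ - L by linarith) r
    rw [ha]; linarith
  have ha0 : (0:ℝ) < a := by linarith
  obtain ⟨Am, hAm0, hAm1, hAmle⟩ :
      ∃ Am : ℝ, 0 ≤ Am ∧ 1 ≤ Am ∧ ∀ s : ℝ, s ≤ ε₁ → profileA r L s ≤ Am := by
    refine ⟨Real.sqrt (1 + (r * (ε₁ - L) ^ (r - 1)) ^ 2), Real.sqrt_nonneg _, ?_, ?_⟩
    · have h := Real.sqrt_le_sqrt
        (show (1:ℝ) ≤ 1 + (r * (ε₁ - L) ^ (r - 1)) ^ 2 by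
          nlinarith only [sq_nonneg (r * (ε₁ - L) ^ (r - 1))])
      rwa [Real.sqrt_one] at h
    · intro s hs; exact ZetaAux.A_le (by linarith) hLε.le hs
  set σ := Real.sqrt (1 - 1 / a ^ 2) with hσdef
  have h1a : 1 / a ^ 2 < 1 := by
    rw [div_lt_one (by positivity)]
    nlinarith only [ha1]
  have hσpos : 0 < σ := by rw [hσdef]; exact Real.sqrt_pos.2 (by linarith)
  clear_value σ
  have h3σL : 0 < 3 * σ * L := mul_pos (mul_pos (by norm_num) hσpos) hL
  have ht1 : 0 < 20 * a ^ 3 * Am * ε₁ :=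
    mul_pos (mul_pos (mul_pos (by norm_num) (pow_pos ha0 3)) (lt_of_lt_of_le one_pos hAm1)) hε₁
  have ht2 : 0 < 8 / (3 * σ * L) := div_pos (by norm_num) h3σL
  set Cv : ℝ := 20 * a ^ 3 * Am * ε₁ + 8 / (3 * σ * L) + 2 with hCv
  have hCpos : 0 < Cv := by rw [hCv]; linarith
  have hC20 : 20 * a ^ 3 * Am * ε₁ ≤ Cv := by rw [hCv]; linarith
  have hC8 : 8 ≤ Cv * (3 * σ * L) := by
    have h' : 8 / (3 * σ * L) ≤ Cv := by rw [hCv]; linarith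
    exact (div_le_iff₀ h3σL).1 h'
  clear_value Cv
  refine ⟨Cv, by rw [hCv]; linarith, 2, one_le_two, ?_⟩
  intro n hn ψ hψ h1 h2
  obtain ⟨hψl, hψu⟩ := hψ
  have hn2 : (2:ℝ) ≤ (n : ℝ) := by exact_mod_cast hn
  have hN0 : (0:ℝ) < (n:ℝ) := by linarith
  have hN1 : (1:ℝ) ≤ (n:ℝ) := by linarith
  set c := a * Real.cos ψ with hcdef
  have hc1 : c < 1 := by
    have : 0 < 1 / ((n:ℝ) + 1) ^ 2 := by positivity
    linarith
  have hc34 : (3:ℝ)/4 < c := by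
    have hx : 1 / (n:ℝ) ^ 2 ≤ 1 / 4 := by
      rw [div_le_div_iff₀ (by positivity) (by norm_num)]
      nlinarith only [hn2]
    linarith
  have hc0 : 0 < c := by linarith
  have hcsq1 : c ^ 2 < 1 := by nlinarith only [hc0, hc1]
  have hcsq916 : (9:ℝ)/16 ≤ c ^ 2 := by
    nlinarith only [mul_le_mul hc34.le hc34.le (show (0:ℝ) ≤ 3/4 by norm_num) hc0.le]
  set δ := 1 - c ^ 2 with hδdef
  clear_value δ
  have hδpos : 0 < δ := by rw [hδdef]; linarith only [hcsq1]
  have hδub : δ < 2 / (n:ℝ) ^ 2 := by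
    have h1c : 1 - c < 1 / (n:ℝ) ^ 2 := by linarith
    have hrw : δ = (1 - c) * (1 + c) := by rw [hδdef]; ring
    rw [hrw]
    calc (1 - c) * (1 + c) < (1 / (n:ℝ) ^ 2) * 2 :=
          mul_lt_mul'' h1c (by linarith) (by linarith) (by linarith)
      _ = 2 / (n:ℝ) ^ 2 := by ring
  have hδlb : 1 / ((n:ℝ) + 1) ^ 2 < δ := by
    have h1c : 1 / ((n:ℝ) + 1) ^ 2 < 1 - c := by linarith
    have hrw : δ = (1 - c) * (1 + c) := by rw [hδdef]; ring
    rw [hrw]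
    calc 1 / ((n:ℝ) + 1) ^ 2 = (1 / ((n:ℝ) + 1) ^ 2) * 1 := by ring
      _ < (1 - c) * (1 + c) := mul_lt_mul'' h1c (by linarith) (by positivity) (by norm_num)
  have hsdpos : 0 < Real.sqrt δ := Real.sqrt_pos.2 hδpos
  have hsd_ub : Real.sqrt δ ≤ 3 / (2 * (n:ℝ)) := by
    have h9 : δ ≤ (3 / (2 * (n:ℝ))) ^ 2 := by
      have he : (3 / (2 * (n:ℝ))) ^ 2 = 9 / (4 * (n:ℝ) ^ 2) := by
        field_simp; ring
      rw [he]
      have h29 : 2 / (n:ℝ) ^ 2 ≤ 9 / (4 * (n:ℝ) ^ 2) := by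
        rw [div_le_div_iff₀ (by positivity) (by positivity)]
        nlinarith only [sq_nonneg (n:ℝ)]
      linarith
    calc Real.sqrt δ ≤ Real.sqrt ((3 / (2 * (n:ℝ))) ^ 2) := Real.sqrt_le_sqrt h9
      _ = 3 / (2 * (n:ℝ)) := Real.sqrt_sq (by positivity)
  have hsd_lb : 1 / ((n:ℝ) + 1) ≤ Real.sqrt δ := by
    have h9 : (1 / ((n:ℝ) + 1)) ^ 2 ≤ δ := by rw [div_pow, one_pow]; linarith
    calc 1 / ((n:ℝ) + 1) = Real.sqrt ((1 / ((n:ℝ) + 1)) ^ 2) :=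
          (Real.sqrt_sq (by positivity)).symm
      _ ≤ Real.sqrt δ := Real.sqrt_le_sqrt h9
  have hde_ub : δ ^ (-(1/2) : ℝ) ≤ (n:ℝ) + 1 := by
    rw [ZetaAux.rpow_half_inv hδpos]
    calc (Real.sqrt δ)⁻¹ ≤ (1 / ((n:ℝ) + 1))⁻¹ :=
          inv_anti₀ (by positivity) hsd_lb
      _ = (n:ℝ) + 1 := by rw [one_div, inv_inv]
  have hde3_ub : δ ^ ((-(1/2) : ℝ) - 1) ≤ ((n:ℝ) + 1) ^ 3 := by
    rw [ZetaAux.rpow_threehalf_inv hδpos]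
    have hlow : (1 / ((n:ℝ) + 1)) * (1 / ((n:ℝ) + 1)) ^ 2 ≤ Real.sqrt δ * δ :=
      mul_le_mul hsd_lb (by rw [div_pow, one_pow]; linarith) (by positivity) hsdpos.le
    calc (Real.sqrt δ * δ)⁻¹ ≤ ((1 / ((n:ℝ) + 1)) * (1 / ((n:ℝ) + 1)) ^ 2)⁻¹ :=
          inv_anti₀ (by positivity) hlow
      _ = ((n:ℝ) + 1) ^ 3 := by field_simp
  have hde3_lb : (n:ℝ) ^ 3 / 3 ≤ δ ^ ((-(1/2) : ℝ) - 1) := by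
    rw [ZetaAux.rpow_threehalf_inv hδpos]
    have hup : Real.sqrt δ * δ ≤ 3 / (n:ℝ) ^ 3 := by
      calc Real.sqrt δ * δ ≤ (3 / (2 * (n:ℝ))) * (2 / (n:ℝ) ^ 2) :=
            mul_le_mul hsd_ub hδub.le hδpos.le (by positivity)
        _ = 3 / (n:ℝ) ^ 3 := by field_simp
    calc (n:ℝ) ^ 3 / 3 = (3 / (n:ℝ) ^ 3)⁻¹ := (inv_div _ _).symm
      _ ≤ (Real.sqrt δ * δ)⁻¹ := inv_anti₀ (mul_pos hsdpos hδpos) hup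
  -- angle facts
  have hψ0 : 0 < ψ := lt_of_le_of_lt (Real.arccos_nonneg _) hψl
  have hψπ : ψ < π := by linarith [Real.pi_pos]
  have hsψpos : 0 < Real.sin ψ := Real.sin_pos_of_pos_of_lt_pi hψ0 hψπ
  have hsψ1 : Real.sin ψ ≤ 1 := Real.sin_le_one ψ
  have hcosψ : Real.cos ψ = c / a := by rw [hcdef]; field_simp
  have hsψσ : σ ≤ Real.sin ψ := by
    have hcossq : Real.cos ψ ^ 2 ≤ 1 / a ^ 2 := by
      rw [hcosψ, div_pow]
      exact (div_le_div_iff_of_pos_right (by positivity)).2 hcsq1.le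
    rw [Real.sin_eq_sqrt_one_sub_cos_sq hψ0.le hψπ.le, hσdef]
    exact Real.sqrt_le_sqrt (by linarith)
  -- positivity of the integrand base
  have hc2 : a ^ 2 * Real.cos ψ ^ 2 = c ^ 2 := by rw [hcdef]; ring
  have hXδ : ∀ t : ℝ, δ ≤ profileXi r L t ^ 2 - a ^ 2 * Real.cos ψ ^ 2 := by
    intro t
    have h := ZetaAux.xi_ge_one (L := L) hr0 t
    rw [hc2, hδdef]
    nlinarith only [h]
  have hXψpos : ∀ t : ℝ, 0 < profileXi r L t ^ 2 - a ^ 2 * Real.cos ψ ^ 2 :=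
    fun t => lt_of_lt_of_le hδpos (hXδ t)
  -- neighborhood control
  set ε' := (1 - c) / (2 * a) with hε'def
  have hε'pos : 0 < ε' := by rw [hε'def]; apply div_pos <;> linarith
  have hball : ∀ x ∈ Metric.ball ψ ε', |a * Real.cos x - c| ≤ (1 - c) / 2 := by
    intro x hx
    have hd : |x - ψ| < ε' := by rw [Metric.mem_ball, Real.dist_eq] at hx; exact hx
    have hcc : |a * Real.cos x - c| ≤ a * |x - ψ| := by
      rw [hcdef, ← mul_sub, abs_mul, abs_of_pos ha0]
      exact mul_le_mul_of_nonneg_left (ZetaAux.cos_lip x ψ) ha0.le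
    have hfin : a * |x - ψ| ≤ (1 - c) / 2 := by
      rw [hε'def] at hd
      calc a * |x - ψ| ≤ a * ((1 - c) / (2 * a)) :=
            mul_le_mul_of_nonneg_left hd.le ha0.le
        _ = (1 - c) / 2 := by field_simp
    linarith only [hcc, hfin]
  set η := 1 - ((1 + c) / 2) ^ 2 with hηdef
  clear_value η
  have hηpos : 0 < η := by rw [hηdef]; nlinarith only [hc0, hc1]
  have hXball : ∀ x ∈ Metric.ball ψ ε', ∀ t : ℝ,
      η ≤ profileXi r L t ^ 2 - a ^ 2 * Real.cos x ^ 2 := by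
    intro x hx t
    have h2' := abs_le.1 (hball x hx)
    have h3' := ZetaAux.xi_ge_one (L := L) hr0 t
    have hu : (a * Real.cos x) ^ 2 ≤ ((1 + c) / 2) ^ 2 := by
      nlinarith only [mul_nonneg
        (show (0:ℝ) ≤ (1 + c) / 2 - a * Real.cos x by linarith only [h2'.2, hc0])
        (show (0:ℝ) ≤ (1 + c) / 2 + a * Real.cos x by linarith only [h2'.1, hc0])]
    have hx2 : 1 ≤ profileXi r L t ^ 2 := by nlinarith only [h3']
    rw [hηdef]
    nlinarith only [hu, hx2]
  -- continuity of integrands at ψ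
  have hcont_base : Continuous fun t => profileXi r L t ^ 2 - a ^ 2 * Real.cos ψ ^ 2 :=
    ((ZetaAux.cont_xi (L := L) hr0).pow 2).sub continuous_const
  have hcontF : Continuous fun t => profileA r L t *
      (profileXi r L t ^ 2 - a ^ 2 * Real.cos ψ ^ 2) ^ (-(1/2) : ℝ) :=
    (ZetaAux.cont_A hr1).mul (hcont_base.rpow_const fun t => Or.inl (hXψpos t).ne')
  have hcontJ : Continuous fun t => profileA r L t *
      (profileXi r L t ^ 2 - a ^ 2 * Real.cos ψ ^ 2) ^ ((-(1/2) : ℝ) - 1) :=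
    (ZetaAux.cont_A hr1).mul (hcont_base.rpow_const fun t => Or.inl (hXψpos t).ne')
  have hIoc : Set.uIoc (0:ℝ) ε₁ = Set.Ioc 0 ε₁ := Set.uIoc_of_le hε₁.le
  -- differentiation under the integral sign
  have hF_meas : ∀ᶠ x in nhds ψ, MeasureTheory.AEStronglyMeasurable
      (fun t => profileA r L t *
        (profileXi r L t ^ 2 - a ^ 2 * Real.cos x ^ 2) ^ (-(1/2) : ℝ))
      (MeasureTheory.volume.restrict (Set.uIoc (0:ℝ) ε₁)) := by
    filter_upwards [Metric.ball_mem_nhds ψ hε'pos] with x hx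
    exact ((ZetaAux.cont_A hr1).mul
      ((((ZetaAux.cont_xi (L := L) hr0).pow 2).sub continuous_const).rpow_const
        fun t => Or.inl (lt_of_lt_of_le hηpos (hXball x hx t)).ne')).aestronglyMeasurable
  have hF'_meas : MeasureTheory.AEStronglyMeasurable
      (fun t => -(profileA r L t * (a ^ 2 * Real.cos ψ * Real.sin ψ) *
        (profileXi r L t ^ 2 - a ^ 2 * Real.cos ψ ^ 2) ^ ((-(1/2) : ℝ) - 1)))
      (MeasureTheory.volume.restrict (Set.uIoc (0:ℝ) ε₁)) :=
    ((((ZetaAux.cont_A hr1).mul continuous_const).mul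
      (hcont_base.rpow_const fun t => Or.inl (hXψpos t).ne')).neg).aestronglyMeasurable
  have h_bound : ∀ᵐ t : ℝ ∂MeasureTheory.volume, t ∈ Set.uIoc (0:ℝ) ε₁ →
      ∀ x ∈ Metric.ball ψ ε',
        ‖-(profileA r L t * (a ^ 2 * Real.cos x * Real.sin x) *
          (profileXi r L t ^ 2 - a ^ 2 * Real.cos x ^ 2) ^ ((-(1/2) : ℝ) - 1))‖ ≤
          Am * a ^ 2 * η ^ ((-(1/2) : ℝ) - 1) := by
    refine Filter.Eventually.of_forall fun t ht x hx => ?_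
    have htε : t ≤ ε₁ := by rw [hIoc] at ht; exact ht.2
    have hA0 := ZetaAux.A_nonneg (L := L) hr0 t
    have hAle := hAmle t htε
    have hZpos : (0:ℝ) < profileXi r L t ^ 2 - a ^ 2 * Real.cos x ^ 2 :=
      lt_of_lt_of_le hηpos (hXball x hx t)
    have hZle : (profileXi r L t ^ 2 - a ^ 2 * Real.cos x ^ 2) ^ ((-(1/2) : ℝ) - 1) ≤
        η ^ ((-(1/2) : ℝ) - 1) :=
      Real.rpow_le_rpow_of_nonpos hηpos (hXball x hx t) (by norm_num)
    have hZ0 : (0:ℝ) ≤ (profileXi r L t ^ 2 - a ^ 2 * Real.cos x ^ 2) ^ ((-(1/2) : ℝ) - 1) :=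
      Real.rpow_nonneg hZpos.le _
    rw [Real.norm_eq_abs, abs_neg, abs_mul, abs_mul]
    have hcs : |a ^ 2 * Real.cos x * Real.sin x| ≤ a ^ 2 := by
      rw [abs_mul, abs_mul]
      calc |a ^ 2| * |Real.cos x| * |Real.sin x| ≤ a ^ 2 * 1 * 1 := by
            apply mul_le_mul (mul_le_mul (le_of_eq (abs_of_nonneg (by positivity)))
              (Real.abs_cos_le_one x) (abs_nonneg _) (by positivity))
              (Real.abs_sin_le_one x) (abs_nonneg _) (by positivity)
        _ = a ^ 2 := by ring
    rw [abs_of_nonneg hA0, abs_of_nonneg hZ0]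
    exact mul_le_mul (mul_le_mul hAle hcs (abs_nonneg _) hAm0) hZle hZ0
      (mul_nonneg hAm0 (by positivity))
  have h_diff : ∀ᵐ t : ℝ ∂MeasureTheory.volume, t ∈ Set.uIoc (0:ℝ) ε₁ →
      ∀ x ∈ Metric.ball ψ ε',
        HasDerivAt (fun x => profileA r L t *
            (profileXi r L t ^ 2 - a ^ 2 * Real.cos x ^ 2) ^ (-(1/2) : ℝ))
          (-(profileA r L t * (a ^ 2 * Real.cos x * Real.sin x) *
            (profileXi r L t ^ 2 - a ^ 2 * Real.cos x ^ 2) ^ ((-(1/2) : ℝ) - 1))) x := by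
    refine Filter.Eventually.of_forall fun t ht x hx => ?_
    have hZpos : (0:ℝ) < profileXi r L t ^ 2 - a ^ 2 * Real.cos x ^ 2 :=
      lt_of_lt_of_le hηpos (hXball x hx t)
    have hin : HasDerivAt (fun y => profileXi r L t ^ 2 - a ^ 2 * Real.cos y ^ 2)
        (2 * a ^ 2 * Real.sin x * Real.cos x) x := by
      have h : HasDerivAt (fun y => profileXi r L t ^ 2 - a ^ 2 * Real.cos y ^ 2) _ x := (((Real.hasDerivAt_cos x).pow 2).const_mul (a ^ 2)).const_sub
        (profileXi r L t ^ 2)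
      convert h using 1
      norm_num
      ring
    have hout := Real.hasDerivAt_rpow_const
      (x := profileXi r L t ^ 2 - a ^ 2 * Real.cos x ^ 2) (p := -(1/2)) (Or.inl hZpos.ne')
    have hcomp := (hout.comp x hin).const_mul (profileA r L t)
    have heq : -(profileA r L t * (a ^ 2 * Real.cos x * Real.sin x) *
        (profileXi r L t ^ 2 - a ^ 2 * Real.cos x ^ 2) ^ ((-(1/2) : ℝ) - 1)) =
        profileA r L t * (-(1/2) * (profileXi r L t ^ 2 - a ^ 2 * Real.cos x ^ 2) ^
          ((-(1/2) : ℝ) - 1) * (2 * a ^ 2 * Real.sin x * Real.cos x)) := by ring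
    rw [heq]
    exact hcomp
  have hmain := intervalIntegral.hasDerivAt_integral_of_dominated_loc_of_deriv_le
    (𝕜 := ℝ) (μ := MeasureTheory.volume) (a := (0:ℝ)) (b := ε₁)
    (F := fun x t => profileA r L t *
      (profileXi r L t ^ 2 - a ^ 2 * Real.cos x ^ 2) ^ (-(1/2) : ℝ))
    (F' := fun x t => -(profileA r L t * (a ^ 2 * Real.cos x * Real.sin x) *
      (profileXi r L t ^ 2 - a ^ 2 * Real.cos x ^ 2) ^ ((-(1/2) : ℝ) - 1)))
    (x₀ := ψ) (bound := fun _ => Am * a ^ 2 * η ^ ((-(1/2) : ℝ) - 1)) (Metric.ball_mem_nhds ψ hε'pos)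
    hF_meas (hcontF.intervalIntegrable 0 ε₁) hF'_meas h_bound intervalIntegrable_const h_diff
  obtain ⟨-, hHd⟩ := hmain
  have hzeta : HasDerivAt (zetaFun r L ε₁ a) _ ψ :=
    ((Real.hasDerivAt_cos ψ).const_mul (2 * a)).mul hHd
  set H := ∫ t in (0:ℝ)..ε₁, profileA r L t *
    (profileXi r L t ^ 2 - a ^ 2 * Real.cos ψ ^ 2) ^ (-(1/2) : ℝ) with hHdef
  set J := ∫ t in (0:ℝ)..ε₁, profileA r L t *
    (profileXi r L t ^ 2 - a ^ 2 * Real.cos ψ ^ 2) ^ ((-(1/2) : ℝ) - 1) with hJdef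
  clear_value H J
  have hDeq : (∫ t in (0:ℝ)..ε₁, -(profileA r L t * (a ^ 2 * Real.cos ψ * Real.sin ψ) *
      (profileXi r L t ^ 2 - a ^ 2 * Real.cos ψ ^ 2) ^ ((-(1/2) : ℝ) - 1))) =
      -(a ^ 2 * Real.cos ψ * Real.sin ψ) * J := by
    rw [hJdef, ← intervalIntegral.integral_const_mul]
    exact intervalIntegral.integral_congr fun t _ => by ring
  have hderiv_val : -deriv (zetaFun r L ε₁ a) ψ =
      2 * a * Real.sin ψ * H + 2 * a ^ 3 * Real.cos ψ ^ 2 * Real.sin ψ * J := by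
    rw [hzeta.deriv, hDeq]; ring
  -- integral bounds
  have hH0 : 0 ≤ H := by
    rw [hHdef]
    exact intervalIntegral.integral_nonneg hε₁.le fun u _ =>
      mul_nonneg (ZetaAux.A_nonneg (L := L) hr0 u) (Real.rpow_nonneg (hXψpos u).le _)
  have hHub : H ≤ ε₁ * (Am * ((n:ℝ) + 1)) := by
    have hmono : H ≤ ∫ _t in (0:ℝ)..ε₁, Am * δ ^ (-(1/2) : ℝ) := by
      rw [hHdef]
      apply intervalIntegral.integral_mono_on hε₁.le (hcontF.intervalIntegrable 0 ε₁)
        intervalIntegrable_const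
      intro u hu
      exact mul_le_mul (hAmle u hu.2)
        (Real.rpow_le_rpow_of_nonpos hδpos (hXδ u) (by norm_num))
        (Real.rpow_nonneg (hXψpos u).le _) hAm0
    rw [intervalIntegral.integral_const, smul_eq_mul, sub_zero] at hmono
    have h' : ε₁ * (Am * δ ^ (-(1/2) : ℝ)) ≤ ε₁ * (Am * ((n:ℝ) + 1)) := by
      apply mul_le_mul_of_nonneg_left _ hε₁.le
      exact mul_le_mul_of_nonneg_left hde_ub hAm0
    linarith only [hmono, h']
  have hJub : J ≤ ε₁ * (Am * ((n:ℝ) + 1) ^ 3) := by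
    have hmono : J ≤ ∫ _t in (0:ℝ)..ε₁, Am * δ ^ ((-(1/2) : ℝ) - 1) := by
      rw [hJdef]
      apply intervalIntegral.integral_mono_on hε₁.le (hcontJ.intervalIntegrable 0 ε₁)
        intervalIntegrable_const
      intro u hu
      exact mul_le_mul (hAmle u hu.2)
        (Real.rpow_le_rpow_of_nonpos hδpos (hXδ u) (by norm_num))
        (Real.rpow_nonneg (hXψpos u).le _) hAm0
    rw [intervalIntegral.integral_const, smul_eq_mul, sub_zero] at hmono
    have h' : ε₁ * (Am * δ ^ ((-(1/2) : ℝ) - 1)) ≤ ε₁ * (Am * ((n:ℝ) + 1) ^ 3) := by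
      apply mul_le_mul_of_nonneg_left _ hε₁.le
      exact mul_le_mul_of_nonneg_left hde3_ub hAm0
    linarith only [hmono, h']
  have hJlb : L * ((n:ℝ) ^ 3 / 3) ≤ J := by
    have hsplit := intervalIntegral.integral_add_adjacent_intervals
      (hcontJ.intervalIntegrable (μ := MeasureTheory.volume) 0 L)
      (hcontJ.intervalIntegrable (μ := MeasureTheory.volume) L ε₁)
    have h2nn : 0 ≤ ∫ t in L..ε₁, profileA r L t *
        (profileXi r L t ^ 2 - a ^ 2 * Real.cos ψ ^ 2) ^ ((-(1/2) : ℝ) - 1) :=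
      intervalIntegral.integral_nonneg hLε.le fun u _ =>
        mul_nonneg (ZetaAux.A_nonneg (L := L) hr0 u) (Real.rpow_nonneg (hXψpos u).le _)
    have h01 : (∫ t in (0:ℝ)..L, profileA r L t *
        (profileXi r L t ^ 2 - a ^ 2 * Real.cos ψ ^ 2) ^ ((-(1/2) : ℝ) - 1)) =
        L * δ ^ ((-(1/2) : ℝ) - 1) := by
      rw [intervalIntegral.integral_congr (g := fun _ => δ ^ ((-(1/2) : ℝ) - 1)) ?_]
      · rw [intervalIntegral.integral_const, smul_eq_mul, sub_zero]
      · intro u hu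
        have huL : u ≤ L := by
          rw [Set.uIcc_of_le hL.le] at hu; exact hu.2
        have hXiu : profileXi r L u = 1 := by unfold profileXi; rw [if_pos huL]
        show profileA r L u *
            (profileXi r L u ^ 2 - a ^ 2 * Real.cos ψ ^ 2) ^ ((-(1/2) : ℝ) - 1) =
          δ ^ ((-(1/2) : ℝ) - 1)
        rw [ZetaAux.A_eq_one huL, hXiu, one_mul, one_pow]
        congr 1
        rw [hδdef, ← hc2]
    have hlow : L * ((n:ℝ) ^ 3 / 3) ≤ L * δ ^ ((-(1/2) : ℝ) - 1) :=
      mul_le_mul_of_nonneg_left hde3_lb hL.le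
    rw [hJdef, ← hsplit, h01]
    linarith only [hlow, h2nn]
  have hJ0 : 0 ≤ J := le_trans (mul_nonneg hL.le (by positivity)) hJlb
  refine ⟨hzeta.differentiableAt, ?_, ?_⟩
  · -- lower bound
    rw [hderiv_val, div_le_iff₀ hCpos]
    have hterm1 : 0 ≤ 2 * a * Real.sin ψ * H :=
      mul_nonneg (mul_nonneg (by linarith) hsψpos.le) hH0
    have hm2 : 2 * a ^ 3 * Real.cos ψ ^ 2 * Real.sin ψ * J =
        (2 * a * c ^ 2) * (Real.sin ψ * J) := by
      rw [hcdef]; ring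
    have m1 : σ * (L * ((n:ℝ) ^ 3 / 3)) ≤ Real.sin ψ * J :=
      mul_le_mul hsψσ hJlb (mul_nonneg hL.le (by positivity)) hsψpos.le
    have hac : (2:ℝ) * (3/4) ^ 2 ≤ 2 * a * c ^ 2 := by
      nlinarith only [hcsq916, ha1, mul_nonneg (sub_nonneg.2 ha1.le) (sq_nonneg c)]
    have m3 : (2 * (3/4:ℝ) ^ 2) * (σ * (L * ((n:ℝ) ^ 3 / 3))) ≤
        (2 * a * c ^ 2) * (Real.sin ψ * J) :=
      mul_le_mul hac m1 (mul_nonneg hσpos.le (mul_nonneg hL.le (by positivity)))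
        (mul_nonneg (mul_nonneg (by norm_num) ha0.le) (sq_nonneg c))
    have hsum : (3/8:ℝ) * σ * L * (n:ℝ) ^ 3 ≤
        2 * a * Real.sin ψ * H + 2 * a ^ 3 * Real.cos ψ ^ 2 * Real.sin ψ * J := by
      rw [hm2]
      linarith only [hterm1, m3]
    have hfin := mul_le_mul_of_nonneg_right hsum hCpos.le
    have hx := mul_nonneg (sub_nonneg.2 hC8) (pow_nonneg hN0.le 3)
    linarith only [hfin, hx]
  · -- upper bound
    rw [hderiv_val]
    have hcsq : Real.cos ψ ^ 2 ≤ 1 := Real.cos_sq_le_one ψ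
    have ha3 : (0:ℝ) < 2 * a ^ 3 := mul_pos (by norm_num) (pow_pos ha0 3)
    have u1 : 2 * a * Real.sin ψ * H ≤ 2 * a * (ε₁ * (Am * ((n:ℝ) + 1))) := by
      have s1 : 2 * a * Real.sin ψ * H ≤ 2 * a * H := by
        linarith only [mul_nonneg (mul_nonneg (show (0:ℝ) ≤ 2 * a by linarith)
          (sub_nonneg.2 hsψ1)) hH0]
      have s2 := mul_le_mul_of_nonneg_left hHub (show (0:ℝ) ≤ 2 * a by linarith)
      linarith only [s1, s2]
    have u2 : 2 * a ^ 3 * Real.cos ψ ^ 2 * Real.sin ψ * J ≤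
        2 * a ^ 3 * (ε₁ * (Am * ((n:ℝ) + 1) ^ 3)) := by
      have hcs1 : Real.cos ψ ^ 2 * Real.sin ψ ≤ 1 := by
        linarith only [hcsq, mul_nonneg (sq_nonneg (Real.cos ψ)) (sub_nonneg.2 hsψ1)]
      have s1 : 2 * a ^ 3 * Real.cos ψ ^ 2 * Real.sin ψ * J ≤ 2 * a ^ 3 * J := by
        linarith only [mul_nonneg (mul_nonneg ha3.le (sub_nonneg.2 hcs1)) hJ0]
      have s2 := mul_le_mul_of_nonneg_left hJub ha3.le
      linarith only [s1, s2]
    have hnn3 : (n:ℝ) ≤ (n:ℝ) ^ 3 := by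
      nlinarith only [mul_nonneg (mul_nonneg hN0.le (show (0:ℝ) ≤ (n:ℝ) - 1 by linarith))
        (show (0:ℝ) ≤ (n:ℝ) + 1 by linarith)]
    have hnn2 : (n:ℝ) ^ 2 ≤ (n:ℝ) ^ 3 := by
      nlinarith only [mul_nonneg (mul_nonneg hN0.le hN0.le)
        (show (0:ℝ) ≤ (n:ℝ) - 1 by linarith)]
    have h1n3 : 1 ≤ (n:ℝ) ^ 3 := by linarith only [hnn3, hN1]
    have hn1 : (n:ℝ) + 1 ≤ 2 * (n:ℝ) ^ 3 := by linarith only [hnn3, hN1]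
    have hn3 : ((n:ℝ) + 1) ^ 3 ≤ 8 * (n:ℝ) ^ 3 := by
      nlinarith only [hnn2, hnn3, h1n3]
    have ha13 : a ≤ a ^ 3 := by
      nlinarith only [mul_nonneg (mul_nonneg ha0.le (show (0:ℝ) ≤ a - 1 by linarith))
        (show (0:ℝ) ≤ a + 1 by linarith)]
    have s3 : 2 * a * (ε₁ * (Am * ((n:ℝ) + 1))) ≤
        2 * a ^ 3 * (ε₁ * (Am * (2 * (n:ℝ) ^ 3))) := by
      nlinarith only [mul_nonneg (sub_nonneg.2 ha13)
          (mul_nonneg (mul_nonneg hε₁.le hAm0) (show (0:ℝ) ≤ (n:ℝ) + 1 by linarith)),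
        mul_nonneg (mul_nonneg (mul_nonneg (pow_nonneg ha0.le 3) hε₁.le) hAm0)
          (sub_nonneg.2 hn1)]
    have s4 : 2 * a ^ 3 * (ε₁ * (Am * ((n:ℝ) + 1) ^ 3)) ≤
        2 * a ^ 3 * (ε₁ * (Am * (8 * (n:ℝ) ^ 3))) := by
      nlinarith only [mul_nonneg (mul_nonneg (mul_nonneg (pow_nonneg ha0.le 3) hε₁.le) hAm0)
        (sub_nonneg.2 hn3)]
    have s5 := mul_le_mul_of_nonneg_right hC20 (pow_nonneg hN0.le 3)
    linarith only [u1, u2, s3, s4, s5]
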